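/- arXiv:2101.11396 — 6 statements merged into one kernel-verified Lean document; each statement's English description precedes it below -/
import Mathlib

section
/- For nonnegative integers a, m, the double integral I_m(a,a) = ((-1)^m/m!) ∫_{(0,1)^2} (log^m(xy)) x^a y^a / (1-xy) dx dy equals (m+1) ζ(m+2, a+1). -/
open MeasureTheory Set Real

lemma exp_neg_image : (fun t : ℝ => Real.exp (-t)) '' Set.Ioi 0 = Set.Ioo 0 1 := by
  ext x
  constructor
  · rintro ⟨t, ht, rfl⟩
    exact ⟨Real.exp_pos _, Real.exp_lt_one_iff.mpr (by simpa using ht)⟩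
  · rintro ⟨hx0, hx1⟩
    exact ⟨-Real.log x, by simpa using Real.log_neg hx0 hx1, by simp [Real.exp_log hx0]⟩

lemma exp_neg_deriv : ∀ t ∈ Set.Ioi (0:ℝ), HasDerivWithinAt (fun t : ℝ => Real.exp (-t))
    (-Real.exp (-t)) (Set.Ioi 0) t := by
  intro t _
  simpa [Function.comp_def] using ((Real.hasDerivAt_exp (-t)).comp t (hasDerivAt_neg t)).hasDerivWithinAt

lemma exp_neg_inj : Set.InjOn (fun t : ℝ => Real.exp (-t)) (Set.Ioi 0) := by
  intro a _ b _ h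
  simpa using Real.exp_injective h

lemma sub_eq (g : ℝ → ℝ) :
    ∫ x in Set.Ioo (0:ℝ) 1, g x
      = ∫ t in Set.Ioi (0:ℝ), Real.exp (-t) * g (Real.exp (-t)) := by
  rw [← exp_neg_image,
    integral_image_eq_integral_abs_deriv_smul measurableSet_Ioi exp_neg_deriv exp_neg_inj g]
  simp [abs_of_pos (Real.exp_pos _)]

lemma sub_int (g : ℝ → ℝ) :
    IntegrableOn g (Set.Ioo (0:ℝ) 1)
      ↔ IntegrableOn (fun t => Real.exp (-t) * g (Real.exp (-t))) (Set.Ioi 0) := by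
  rw [← exp_neg_image,
    integrableOn_image_iff_integrableOn_abs_deriv_smul measurableSet_Ioi exp_neg_deriv exp_neg_inj g]
  simp only [smul_eq_mul, abs_neg, abs_of_pos (Real.exp_pos _)]

lemma gamma_val (n j : ℕ) :
    ∫ t in Set.Ioi (0:ℝ), t ^ j * Real.exp (-(((n:ℝ)+1) * t))
      = (j.factorial : ℝ) / ((n:ℝ)+1) ^ (j+1) := by
  have h := Real.integral_rpow_mul_exp_neg_mul_Ioi (a := (j:ℝ)+1) (r := (n:ℝ)+1)
    (by positivity) (by positivity)
  have h2 : ∀ t : ℝ, t ^ (((j:ℝ)+1) - 1) = t ^ (j:ℝ) := fun t => by norm_num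
  simp only [h2] at h
  rw [show (fun t : ℝ => t ^ j * Real.exp (-(((n:ℝ)+1) * t)))
      = fun t : ℝ => t ^ ((j:ℝ)) * Real.exp (-(((n:ℝ)+1) * t)) from
      funext fun t => by rw [Real.rpow_natCast]]
  rw [h, Real.Gamma_nat_eq_factorial,
    show ((j:ℝ)+1) = ((j+1:ℕ):ℝ) by push_cast; ring, Real.rpow_natCast]
  rw [div_pow, one_pow]
  ring

lemma gamma_int (n j : ℕ) :
    IntegrableOn (fun t : ℝ => t ^ j * Real.exp (-(((n:ℝ)+1) * t))) (Set.Ioi 0) := by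
  have h := integrableOn_rpow_mul_exp_neg_mul_rpow (p := 1) (s := (j:ℝ)) (b := (n:ℝ)+1)
    (lt_of_lt_of_le neg_one_lt_zero (Nat.cast_nonneg j)) (by norm_num) (by positivity)
  refine h.congr_fun (fun t ht => ?_) measurableSet_Ioi
  simp only [Real.rpow_one, Real.rpow_natCast, neg_mul]

lemma oneD_val (n j : ℕ) :
    ∫ x in Set.Ioo (0:ℝ) 1, x ^ n * (-Real.log x) ^ j
      = (j.factorial : ℝ) / ((n:ℝ)+1) ^ (j+1) := by
  rw [sub_eq, ← gamma_val n j]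
  refine setIntegral_congr_fun measurableSet_Ioi (fun t ht => ?_)
  simp only [Real.log_exp]
  rw [← Real.exp_nat_mul]
  rw [show -(((n:ℝ)+1) * t) = (n:ℝ) * (-t) + (-t) by ring, Real.exp_add]
  ring_nf

lemma oneD_int (n j : ℕ) :
    IntegrableOn (fun x : ℝ => x ^ n * (-Real.log x) ^ j) (Set.Ioo 0 1) := by
  rw [sub_int]
  refine (gamma_int n j).congr_fun (fun t ht => ?_) measurableSet_Ioi
  simp only [Real.log_exp]
  rw [show -(((n:ℝ)+1) * t) = (n:ℝ) * (-t) + (-t) by ring, Real.exp_add, Real.exp_nat_mul]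
  ring


lemma sign_flip (j : ℕ) (n : ℕ) : (fun x : ℝ => x ^ n * Real.log x ^ j)
    = fun x => (-1:ℝ)^j * (x ^ n * (-Real.log x) ^ j) := by
  funext x
  have h : ((-1:ℝ))^j * (-Real.log x)^j = (Real.log x)^j := by
    rw [← mul_pow]; norm_num
  rw [← h]; ring

lemma oneD_val' (n j : ℕ) :
    ∫ x in Set.Ioo (0:ℝ) 1, x ^ n * (Real.log x) ^ j
      = (-1:ℝ)^j * (j.factorial : ℝ) / ((n:ℝ)+1) ^ (j+1) := by
  rw [sign_flip, integral_const_mul, oneD_val, mul_div_assoc]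

lemma oneD_int' (n j : ℕ) :
    IntegrableOn (fun x : ℝ => x ^ n * (Real.log x) ^ j) (Set.Ioo 0 1) := by
  rw [sign_flip]; exact (oneD_int n j).const_mul _

lemma twoD_int (c m : ℕ) :
    IntegrableOn (fun p : ℝ × ℝ => (Real.log p.1 + Real.log p.2) ^ m * p.1 ^ c * p.2 ^ c)
      ((Set.Ioo (0:ℝ) 1) ×ˢ (Set.Ioo (0:ℝ) 1)) := by
  have hfun : (fun p : ℝ × ℝ => (Real.log p.1 + Real.log p.2) ^ m * p.1 ^ c * p.2 ^ c)
      = fun p : ℝ × ℝ => ∑ j ∈ Finset.range (m+1),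
          (m.choose j : ℝ) * ((p.1 ^ c * Real.log p.1 ^ j) * (p.2 ^ c * Real.log p.2 ^ (m-j))) := by
    funext p
    rw [add_pow]
    rw [Finset.sum_mul, Finset.sum_mul]
    exact Finset.sum_congr rfl fun j hj => by ring
  rw [hfun, IntegrableOn, Measure.volume_eq_prod, ← Measure.prod_restrict]
  exact integrable_finset_sum _ fun j hj =>
    (((oneD_int' c j).mul_prod (oneD_int' c (m-j))).const_mul _)

lemma twoD_val (c m : ℕ) :
    (∫ p in (Set.Ioo (0:ℝ) 1) ×ˢ (Set.Ioo (0:ℝ) 1),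
        (Real.log p.1 + Real.log p.2) ^ m * p.1 ^ c * p.2 ^ c)
      = (-1:ℝ)^m * ((m+1).factorial : ℝ) / ((c:ℝ)+1) ^ (m+2) := by
  have hfun : (fun p : ℝ × ℝ => (Real.log p.1 + Real.log p.2) ^ m * p.1 ^ c * p.2 ^ c)
      = fun p : ℝ × ℝ => ∑ j ∈ Finset.range (m+1),
          (m.choose j : ℝ) * ((p.1 ^ c * Real.log p.1 ^ j) * (p.2 ^ c * Real.log p.2 ^ (m-j))) := by
    funext p
    rw [add_pow]
    rw [Finset.sum_mul, Finset.sum_mul]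
    exact Finset.sum_congr rfl fun j hj => by ring
  rw [hfun, Measure.volume_eq_prod, ← Measure.prod_restrict]
  rw [integral_finset_sum _ fun j hj =>
    (((oneD_int' c j).mul_prod (oneD_int' c (m-j))).const_mul _)]
  have hterm : ∀ j ∈ Finset.range (m+1),
      (∫ p : ℝ × ℝ, (m.choose j : ℝ) *
          ((p.1 ^ c * Real.log p.1 ^ j) * (p.2 ^ c * Real.log p.2 ^ (m-j)))
        ∂((volume.restrict (Set.Ioo (0:ℝ) 1)).prod (volume.restrict (Set.Ioo (0:ℝ) 1))))
      = (-1:ℝ)^m * (m.factorial : ℝ) / ((c:ℝ)+1) ^ (m+2) := by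
    intro j hj
    have hjm : j ≤ m := Nat.lt_succ_iff.mp (Finset.mem_range.mp hj)
    rw [integral_const_mul,
      integral_prod_mul (f := fun x : ℝ => x ^ c * Real.log x ^ j)
        (g := fun y : ℝ => y ^ c * Real.log y ^ (m-j)), oneD_val', oneD_val']
    have h1 : (-1:ℝ)^j * (-1:ℝ)^(m-j) = (-1:ℝ)^m := by
      rw [← pow_add]; congr 1; omega
    have h2 : ((c:ℝ)+1)^(j+1) * ((c:ℝ)+1)^(m-j+1) = ((c:ℝ)+1)^(m+2) := by
      rw [← pow_add]; congr 1; omega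
    have h3 : (m.choose j : ℝ) * (j.factorial : ℝ) * ((m-j).factorial : ℝ)
        = (m.factorial : ℝ) := by
      exact_mod_cast congrArg Nat.cast (Nat.choose_mul_factorial_mul_factorial hjm)
    have hc : ((c:ℝ)+1) ≠ 0 := by positivity
    field_simp
    rw [← h1, ← h2, ← h3]
    ring
  rw [Finset.sum_congr rfl hterm, Finset.sum_const, Finset.card_range, nsmul_eq_mul]
  rw [Nat.factorial_succ]
  push_cast
  ring


theorem stmt_6 (a m : ℕ) :
    ((-1 : ℝ) ^ m / (m.factorial : ℝ)) *
        ∫ p in (Set.Ioo (0 : ℝ) 1) ×ˢ (Set.Ioo (0 : ℝ) 1),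
          (Real.log (p.1 * p.2)) ^ m * p.1 ^ a * p.2 ^ a / (1 - p.1 * p.2) =
      (m + 1 : ℝ) * ∑' k : ℕ, 1 / ((a : ℝ) + 1 + k) ^ (m + 2) := by
  set S := (Set.Ioo (0:ℝ) 1) ×ˢ (Set.Ioo (0:ℝ) 1) with hSdef
  have hS : MeasurableSet S := measurableSet_Ioo.prod measurableSet_Ioo
  set F : ℕ → ℝ × ℝ → ℝ := fun n p =>
    (Real.log p.1 + Real.log p.2) ^ m * p.1 ^ (a+n) * p.2 ^ (a+n) with hF
  have hval : ∀ n : ℕ, (∫ p in S, F n p)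
      = ((-1:ℝ)^m * ((m+1).factorial : ℝ)) * (1 / ((a:ℝ)+1+n) ^ (m+2)) := by
    intro n
    rw [twoD_val (a+n) m, mul_one_div]
    congr 2
    push_cast; ring
  have hsq : ((-1:ℝ)^m) * ((-1:ℝ)^m) = 1 := by
    rw [← pow_add, ← two_mul, pow_mul]; norm_num
  have hnormpt : ∀ n : ℕ, ∀ p ∈ S, ‖F n p‖ = (-1:ℝ)^m * F n p := by
    rintro n ⟨x,y⟩ ⟨⟨hx0,hx1⟩,⟨hy0,hy1⟩⟩
    have hlx := Real.log_neg hx0 hx1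
    have hly := Real.log_neg hy0 hy1
    have hl : Real.log x + Real.log y < 0 := by linarith
    have h1 : |Real.log x + Real.log y| = -(Real.log x + Real.log y) := abs_of_neg hl
    have h2 : |x| = x := abs_of_pos hx0
    have h3 : |y| = y := abs_of_pos hy0
    simp only [hF, Real.norm_eq_abs, abs_mul, abs_pow, h1, h2, h3]
    rw [neg_pow]
    ring
  have hnorm : ∀ n : ℕ, (∫ p in S, ‖F n p‖)
      = ((m+1).factorial : ℝ) * (1 / ((a:ℝ)+1+n) ^ (m+2)) := by
    intro n
    rw [setIntegral_congr_fun hS (hnormpt n), integral_const_mul, hval n,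
      ← mul_assoc, ← mul_assoc, hsq]
    ring
  have hsummable : Summable (fun n : ℕ => ((m+1).factorial : ℝ) * (1 / ((a:ℝ)+1+n) ^ (m+2))) := by
    apply Summable.mul_left
    have h1 : Summable (fun n : ℕ => 1 / ((n:ℝ)) ^ 2) :=
      Real.summable_one_div_nat_pow.mpr one_lt_two
    have h2 := (summable_nat_add_iff (a+1)).mpr h1
    refine Summable.of_nonneg_of_le (fun n => by positivity) (fun n => ?_) h2
    have hb : (1:ℝ) ≤ (a:ℝ)+1+n := by
      have : (0:ℝ) ≤ (a:ℝ) := Nat.cast_nonneg a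
      have : (0:ℝ) ≤ (n:ℝ) := Nat.cast_nonneg n
      linarith
    have hcast : ((n + (a+1) : ℕ) : ℝ) = (a:ℝ)+1+n := by push_cast; ring
    rw [hcast]
    apply one_div_le_one_div_of_le (by positivity)
    exact pow_le_pow_right₀ hb (by omega)
  have hint : ∀ n : ℕ, Integrable (F n) (volume.restrict S) := fun n => twoD_int (a+n) m
  have hsum2 : Summable (fun n : ℕ => ∫ p in S, ‖F n p‖) := by
    simp_rw [hnorm]; exact hsummable
  have key := integral_tsum_of_summable_integral_norm hint hsum2
  have hG : ∀ p ∈ S, (Real.log (p.1 * p.2)) ^ m * p.1 ^ a * p.2 ^ a / (1 - p.1 * p.2)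
      = ∑' n : ℕ, F n p := by
    rintro ⟨x,y⟩ ⟨⟨hx0,hx1⟩,⟨hy0,hy1⟩⟩
    have hxy1 : x * y < 1 := by nlinarith
    have hxy0 : 0 ≤ x * y := by positivity
    have hlog : Real.log (x*y) = Real.log x + Real.log y :=
      Real.log_mul (ne_of_gt hx0) (ne_of_gt hy0)
    have hFn : ∀ n : ℕ, F n (x,y)
        = ((Real.log x + Real.log y) ^ m * x ^ a * y ^ a) * (x*y)^n := by
      intro n
      simp only [hF, pow_add, mul_pow]
      ring
    simp_rw [hFn]
    rw [tsum_mul_left, tsum_geometric_of_lt_one hxy0 hxy1, hlog]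
    field_simp
  rw [setIntegral_congr_fun hS hG, ← key]
  have hvals : ∑' n : ℕ, (∫ p in S, F n p)
      = ((-1:ℝ)^m * ((m+1).factorial : ℝ)) * ∑' n : ℕ, 1 / ((a:ℝ)+1+n) ^ (m+2) := by
    simp_rw [hval]; exact tsum_mul_left
  rw [hvals, ← mul_assoc]
  have hmfac : (m.factorial : ℝ) ≠ 0 := Nat.cast_ne_zero.mpr m.factorial_ne_zero
  have : ((-1:ℝ)^m / (m.factorial : ℝ)) * ((-1:ℝ)^m * ((m+1).factorial : ℝ)) = ((m:ℝ)+1) := by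
    rw [Nat.factorial_succ]
    push_cast
    field_simp
    linear_combination hsq
  rw [this]
end

section
/- For t ≥ 0 and nonnegative integers a_1,...,a_n (n ≥ 2), the integral ∫_{(0,1)^n} ∏_{i=1}^n x_i^{a_i + t} / (1 - ∏_{i=1}^n x_i) dx_1···dx_n equals Σ_{k=0}^∞ ∏_{i=1}^n 1/(1 + a_i + k + t). -/
open MeasureTheory Set

lemma aux_one_dim {c : ℝ} (hc : 0 ≤ c) :
    IntegrableOn (fun y : ℝ => y ^ c) (Set.Ioo 0 1) volume ∧
      ∫ y in Set.Ioo (0:ℝ) 1, y ^ c = (c + 1)⁻¹ := by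
  have h1 : (-1:ℝ) < c := by linarith
  have hii : IntervalIntegrable (fun y : ℝ => y ^ c) volume 0 1 :=
    intervalIntegral.intervalIntegrable_rpow' h1
  have hInt : IntegrableOn (fun y : ℝ => y ^ c) (Set.Ioo 0 1) volume := by
    have := (intervalIntegrable_iff_integrableOn_Ioc_of_le (by norm_num : (0:ℝ) ≤ 1)).mp hii
    exact this.mono_set Set.Ioo_subset_Ioc_self
  refine ⟨hInt, ?_⟩
  rw [restrict_Ioo_eq_restrict_Ioc, ← intervalIntegral.integral_of_le (by norm_num : (0:ℝ) ≤ 1),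
    integral_rpow (Or.inl h1)]
  rw [Real.one_rpow, Real.zero_rpow (by linarith : c + 1 ≠ 0)]
  rw [sub_zero, one_div]

lemma aux_prod_int (n : ℕ) (c : Fin n → ℝ) (hc : ∀ i, 0 ≤ c i) :
    IntegrableOn (fun x : Fin n → ℝ => ∏ i, x i ^ c i)
      (Set.univ.pi fun _ => Set.Ioo (0:ℝ) 1) volume ∧
      ∫ x : Fin n → ℝ in Set.univ.pi (fun _ => Set.Ioo (0 : ℝ) 1),
        ∏ i, x i ^ c i = ∏ i, (c i + 1)⁻¹ := by
  have hind : (fun x : Fin n → ℝ => ∏ i, (Set.Ioo (0:ℝ) 1).indicator (fun y => y ^ c i) (x i))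
      = (Set.univ.pi fun _ => Set.Ioo (0:ℝ) 1).indicator
          (fun x : Fin n → ℝ => ∏ i, x i ^ c i) := by
    funext x
    by_cases hx : x ∈ Set.univ.pi fun _ => Set.Ioo (0:ℝ) 1
    · rw [Set.indicator_of_mem hx]
      exact Finset.prod_congr rfl fun i _ => Set.indicator_of_mem (hx i (Set.mem_univ i)) _
    · rw [Set.indicator_of_notMem hx]
      obtain ⟨i, hi⟩ : ∃ i, x i ∉ Set.Ioo (0:ℝ) 1 := by simpa [Set.mem_pi] using hx
      exact Finset.prod_eq_zero (Finset.mem_univ i) (Set.indicator_of_notMem hi _)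
  have h1 : ∀ i : Fin n, Integrable ((Set.Ioo (0:ℝ) 1).indicator (fun y => y ^ c i)) volume :=
    fun i => (integrable_indicator_iff measurableSet_Ioo).mpr (aux_one_dim (hc i)).1
  have hIprod : Integrable
      (fun x : Fin n → ℝ => ∏ i, (Set.Ioo (0:ℝ) 1).indicator (fun y => y ^ c i) (x i)) volume :=
    Integrable.fintype_prod h1
  constructor
  · rw [← integrable_indicator_iff (MeasurableSet.univ_pi fun _ => measurableSet_Ioo)]
    rw [← hind]
    exact hIprod
  · rw [← integral_indicator (MeasurableSet.univ_pi fun _ => measurableSet_Ioo), ← hind,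
      MeasureTheory.integral_fintype_prod_volume_eq_prod
        (f := fun i => (Set.Ioo (0:ℝ) 1).indicator (fun y => y ^ c i))]
    refine Finset.prod_congr rfl fun i _ => ?_
    rw [integral_indicator measurableSet_Ioo]
    exact (aux_one_dim (hc i)).2

theorem stmt_9 (n : ℕ) (hn : 2 ≤ n) (a : Fin n → ℕ) (t : ℝ) (ht : 0 ≤ t) :
    ∫ x : Fin n → ℝ in Set.univ.pi (fun _ => Set.Ioo (0 : ℝ) 1),
        (∏ i, x i ^ ((a i : ℝ) + t)) / (1 - ∏ i, x i) =
      ∑' k : ℕ, ∏ i, 1 / (1 + (a i : ℝ) + k + t) := by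
  set S : Set (Fin n → ℝ) := Set.univ.pi (fun _ => Set.Ioo (0 : ℝ) 1) with hSdef
  have hS : MeasurableSet S := MeasurableSet.univ_pi fun _ => measurableSet_Ioo
  set F : ℕ → (Fin n → ℝ) → ℝ := fun k x => ∏ i, x i ^ ((a i : ℝ) + t + k) with hF
  have hc : ∀ k : ℕ, ∀ i, (0:ℝ) ≤ (a i : ℝ) + t + k := fun k i => by positivity
  have hInt : ∀ k, IntegrableOn (F k) S volume := fun k =>
    (aux_prod_int n (fun i => (a i : ℝ) + t + k) (hc k)).1
  have hval : ∀ k, ∫ x in S, F k x = ∏ i, ((a i : ℝ) + t + k + 1)⁻¹ := fun k =>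
    (aux_prod_int n (fun i => (a i : ℝ) + t + k) (hc k)).2
  -- facts about x ∈ S
  have hxS : ∀ x ∈ S, ∀ i, (0:ℝ) < x i ∧ x i < 1 := by
    intro x hx i
    exact ⟨(hx i (Set.mem_univ i)).1, (hx i (Set.mem_univ i)).2⟩
  have hnorm : ∀ k, ∫ x in S, ‖F k x‖ = ∏ i, ((a i : ℝ) + t + k + 1)⁻¹ := by
    intro k
    rw [← hval k]
    refine setIntegral_congr_fun hS fun x hx => ?_
    exact Real.norm_of_nonneg (Finset.prod_nonneg fun i _ =>
      Real.rpow_nonneg (le_of_lt (hxS x hx i).1) _)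
  have hsummable : Summable fun k : ℕ => ∫ x in S, ‖F k x‖ := by
    simp only [hnorm]
    have hsb : Summable fun k : ℕ => (((k:ℝ) + 1)⁻¹) ^ 2 := by
      have h0 : Summable fun m : ℕ => 1 / (m:ℝ) ^ 2 :=
        Real.summable_one_div_nat_pow.mpr one_lt_two
      have := (summable_nat_add_iff 1).mpr h0
      refine this.congr fun k => ?_
      push_cast
      rw [one_div, inv_pow]
    refine Summable.of_nonneg_of_le
      (fun k => Finset.prod_nonneg fun i _ => by positivity) (fun k => ?_) hsb
    calc ∏ i, ((a i : ℝ) + t + k + 1)⁻¹ ≤ ∏ _i : Fin n, ((k:ℝ) + 1)⁻¹ := by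
          refine Finset.prod_le_prod (fun i _ => by positivity) fun i _ => ?_
          apply inv_anti₀ (by positivity)
          have : (0:ℝ) ≤ (a i : ℝ) + t := by positivity
          linarith
      _ = (((k:ℝ) + 1)⁻¹) ^ n := by rw [Finset.prod_const, Finset.card_univ, Fintype.card_fin]
      _ ≤ (((k:ℝ) + 1)⁻¹) ^ 2 := by
          apply pow_le_pow_of_le_one (by positivity) ?_ hn
          rw [inv_le_one_iff₀]
          right; linarith [Nat.cast_nonneg (α := ℝ) k]
  have hpoint : ∀ x ∈ S,
      (∏ i, x i ^ ((a i : ℝ) + t)) / (1 - ∏ i, x i) = ∑' k : ℕ, F k x := by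
    intro x hx
    have hx0 : ∀ i, (0:ℝ) < x i := fun i => (hxS x hx i).1
    have hx1 : ∀ i, x i < 1 := fun i => (hxS x hx i).2
    have hp0 : (0:ℝ) ≤ ∏ i, x i := Finset.prod_nonneg fun i _ => (hx0 i).le
    have i0 : Fin n := ⟨0, by omega⟩
    have hp1 : (∏ i, x i) < 1 := by
      have hsplit : x i0 * ∏ i ∈ Finset.univ.erase i0, x i = ∏ i, x i :=
        Finset.mul_prod_erase _ _ (Finset.mem_univ i0)
      have hle1 : ∏ i ∈ Finset.univ.erase i0, x i ≤ 1 :=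
        Finset.prod_le_one (fun i _ => (hx0 i).le) (fun i _ => (hx1 i).le)
      calc (∏ i, x i) = x i0 * ∏ i ∈ Finset.univ.erase i0, x i := hsplit.symm
        _ ≤ x i0 * 1 := by
            exact mul_le_mul_of_nonneg_left hle1 (hx0 i0).le
        _ < 1 := by rw [mul_one]; exact hx1 i0
    calc (∏ i, x i ^ ((a i : ℝ) + t)) / (1 - ∏ i, x i)
        = (∏ i, x i ^ ((a i : ℝ) + t)) * ∑' k : ℕ, (∏ i, x i) ^ k := by
          rw [tsum_geometric_of_lt_one hp0 hp1, div_eq_mul_inv]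
      _ = ∑' k : ℕ, (∏ i, x i ^ ((a i : ℝ) + t)) * (∏ i, x i) ^ k := tsum_mul_left.symm
      _ = ∑' k : ℕ, F k x := by
          refine tsum_congr fun k => ?_
          rw [← Finset.prod_pow, ← Finset.prod_mul_distrib]
          refine Finset.prod_congr rfl fun i _ => ?_
          rw [← Real.rpow_natCast (x i) k, ← Real.rpow_add (hx0 i)]
  calc ∫ x in S, (∏ i, x i ^ ((a i : ℝ) + t)) / (1 - ∏ i, x i)
      = ∫ x in S, ∑' k : ℕ, F k x := setIntegral_congr_fun hS hpoint
    _ = ∑' k : ℕ, ∫ x in S, F k x :=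
        (integral_tsum_of_summable_integral_norm (fun k => hInt k) hsummable).symm
    _ = ∑' k : ℕ, ∏ i, 1 / (1 + (a i : ℝ) + k + t) := by
        refine tsum_congr fun k => ?_
        rw [hval k]
        refine Finset.prod_congr rfl fun i _ => ?_
        rw [inv_eq_one_div]
        congr 1
        ring
end

section
/- Let a_1 < a_2 < ... < a_n be nonnegative integers with n ≥ 2, and λ_i = ∏_{j≠i} 1/(a_j - a_i). Then Σ_{k=0}^∞ ∏_{i=1}^n 1/(1 + a_i + k) = Σ_{i=1}^{n-1} λ_i Σ_{k=a_i+1}^{a_n} 1/k. -/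
open Finset Polynomial Filter

private theorem lead_basis10 {s : Finset ℕ} {v : ℕ → ℝ} (hvs : Set.InjOn v s) {i : ℕ}
    (hi : i ∈ s) :
    (Lagrange.basis s v i).leadingCoeff = ∏ j ∈ s.erase i, (v i - v j)⁻¹ := by
  rw [Lagrange.basis, leadingCoeff_prod]
  refine prod_congr rfl fun j hj => ?_
  have hij : v i ≠ v j := by
    rcases mem_erase.mp hj with ⟨hne, hj'⟩
    exact fun h => hne.symm (hvs hi hj' h)
  rw [Lagrange.basisDivisor, leadingCoeff_mul, leadingCoeff_C, leadingCoeff_X_sub_C, mul_one]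

private theorem sum_lam_zero10 {s : Finset ℕ} {v : ℕ → ℝ} (hvs : Set.InjOn v s)
    (hs : 2 ≤ s.card) :
    ∑ i ∈ s, ∏ j ∈ s.erase i, (v i - v j)⁻¹ = 0 := by
  have hne : s.Nonempty := card_pos.mp (by omega)
  have h1 := Lagrange.sum_basis hvs hne
  have h2 := congrArg (fun p => Polynomial.coeff p (s.card - 1)) h1
  simp only [finset_sum_coeff] at h2
  rw [Polynomial.coeff_one] at h2
  rw [if_neg (by omega)] at h2
  rw [← h2]
  refine sum_congr rfl fun i hi => ?_
  have := lead_basis10 hvs hi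
  rw [Polynomial.leadingCoeff, Lagrange.natDegree_basis hvs hi] at this
  exact this.symm

private theorem partial_frac10 {s : Finset ℕ} {v : ℕ → ℝ} (hvs : Set.InjOn v s)
    (hne : s.Nonempty) {x : ℝ} (hx : ∀ j ∈ s, x ≠ v j) :
    ∏ j ∈ s, (x - v j)⁻¹ = ∑ i ∈ s, (∏ j ∈ s.erase i, (v i - v j)⁻¹) * (x - v i)⁻¹ := by
  have h1 := congrArg (Polynomial.eval x) (Lagrange.sum_basis hvs hne)
  simp only [eval_finset_sum, eval_one] at h1
  have hP : ∀ j ∈ s, x - v j ≠ 0 := fun j hj => sub_ne_zero_of_ne (hx j hj)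
  have hPne : ∏ j ∈ s, (x - v j) ≠ 0 := prod_ne_zero_iff.mpr hP
  have key : ∀ i ∈ s, Polynomial.eval x (Lagrange.basis s v i) =
      (∏ j ∈ s.erase i, (v i - v j)⁻¹) * (x - v i)⁻¹ * ∏ j ∈ s, (x - v j) := by
    intro i hi
    rw [Lagrange.basis, eval_prod]
    have : ∀ j ∈ s.erase i, Polynomial.eval x (Lagrange.basisDivisor (v i) (v j)) =
        (v i - v j)⁻¹ * (x - v j) := by
      intro j hj
      simp [Lagrange.basisDivisor]
    rw [prod_congr rfl this, prod_mul_distrib]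
    rw [← Finset.mul_prod_erase s _ hi]
    rw [mul_assoc, inv_mul_cancel_left₀ (hP i hi)]
  rw [sum_congr rfl key, ← sum_mul] at h1
  rw [eq_div_of_mul_eq hPne h1, one_div, ← prod_inv_distrib]

private noncomputable def H10 (m : ℕ) : ℝ := ∑ j ∈ range m, ((j : ℝ) + 1)⁻¹

private theorem C110 (c K : ℕ) : ∑ k ∈ range K, ((c : ℝ) + 1 + k)⁻¹ = H10 (c + K) - H10 c := by
  rw [H10, H10, ← Finset.sum_Ico_eq_sub _ (Nat.le_add_right c K), Finset.sum_Ico_eq_sum_range]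
  simp only [Nat.add_sub_cancel_left]
  refine sum_congr rfl fun k _ => ?_
  push_cast; ring_nf

private theorem C210 (c m : ℕ) (h : c ≤ m) :
    ∑ k ∈ Finset.Icc (c + 1) m, ((k : ℝ))⁻¹ = H10 m - H10 c := by
  rw [H10, H10, ← Finset.sum_Ico_eq_sub _ h, Finset.sum_Ico_eq_sum_range]
  have h2 : Finset.Icc (c + 1) m = Finset.Ico (c + 1) (m + 1) := by
    ext x; simp [Nat.lt_succ_iff]
  rw [h2, Finset.sum_Ico_eq_sum_range]
  have h3 : m + 1 - (c + 1) = m - c := by omega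
  rw [h3]
  refine sum_congr rfl fun k _ => ?_
  push_cast; ring_nf

private theorem D10 (c : ℕ) : Tendsto (fun K => H10 (c + K) - H10 K) atTop (nhds 0) := by
  have hb : ∀ K : ℕ, H10 (c + K) - H10 K ≤ c * (1 / (K + 1)) := by
    intro K
    have h4 : H10 (c + K) - H10 K = ∑ j ∈ Finset.Ico K (c + K), ((j : ℝ) + 1)⁻¹ := by
      rw [H10, H10, ← Finset.sum_Ico_eq_sub _ (Nat.le_add_left K c)]
    rw [h4]
    calc ∑ j ∈ Finset.Ico K (c + K), ((j : ℝ) + 1)⁻¹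
        ≤ ∑ _j ∈ Finset.Ico K (c + K), ((K : ℝ) + 1)⁻¹ := by
          refine sum_le_sum fun j hj => ?_
          have hj' : K ≤ j := (Finset.mem_Ico.mp hj).1
          have h5 : (K : ℝ) + 1 ≤ (j : ℝ) + 1 := by
            have := Nat.cast_le (α := ℝ).mpr hj'; linarith
          exact inv_anti₀ (by positivity) h5
      _ = c * (1 / (K + 1)) := by
          rw [Finset.sum_const, Nat.card_Ico]
          have h6 : c + K - K = c := by omega
          rw [h6]; simp [one_div]
  have h0 : ∀ K : ℕ, 0 ≤ H10 (c + K) - H10 K := by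
    intro K
    rw [H10, H10]
    refine sub_nonneg.mpr (sum_le_sum_of_subset_of_nonneg ?_ ?_)
    · exact Finset.range_subset_range.mpr (Nat.le_add_left K c)
    · intro j _ _; positivity
  have hlim : Tendsto (fun K : ℕ => (c : ℝ) * (1 / (K + 1))) atTop (nhds 0) := by
    have := tendsto_one_div_add_atTop_nhds_zero_nat.const_mul (c : ℝ)
    simpa using this
  exact squeeze_zero h0 hb hlim

theorem stmt_10 (n : ℕ) (hn : 2 ≤ n) (a : ℕ → ℕ)
    (ha : ∀ i j, i < j → j < n → a i < a j) :
    ∑' k : ℕ, ∏ i ∈ Finset.range n, (1 : ℝ) / (1 + a i + k) =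
      ∑ i ∈ Finset.range (n - 1),
        (∏ j ∈ (Finset.range n).erase i, (1 : ℝ) / ((a j : ℝ) - a i)) *
          ∑ k ∈ Finset.Icc (a i + 1) (a (n - 1)), (1 : ℝ) / k := by
  set v : ℕ → ℝ := fun i => -((a i : ℕ) : ℝ) with hv
  have hvs : Set.InjOn v (Finset.range n) := by
    intro i hi j hj hij
    simp only [Finset.coe_range, Set.mem_Iio] at hi hj
    simp only [hv, neg_inj, Nat.cast_inj] at hij
    by_contra hne
    rcases Nat.lt_or_ge i j with h | h
    · exact absurd hij (Nat.ne_of_lt (ha i j h hj))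
    · have : j < i := by omega
      exact absurd hij.symm (Nat.ne_of_lt (ha j i this hi))
  set lam : ℕ → ℝ := fun i => ∏ j ∈ (Finset.range n).erase i, ((a j : ℝ) - a i)⁻¹ with hlam
  have hlamv : ∀ i, lam i = ∏ j ∈ (Finset.range n).erase i, (v i - v j)⁻¹ := by
    intro i
    refine prod_congr rfl fun j _ => ?_
    simp [hv]; ring_nf
  have hlam0 : ∑ i ∈ Finset.range n, lam i = 0 := by
    rw [Finset.sum_congr rfl fun i _ => hlamv i]
    exact sum_lam_zero10 hvs (by simpa using hn)
  set f : ℕ → ℝ := fun k => ∏ i ∈ Finset.range n, (1 : ℝ) / (1 + a i + k) with hf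
  -- partial fractions for each k
  have hstep1 : ∀ k : ℕ, f k = ∑ i ∈ Finset.range n, lam i * ((a i : ℝ) + 1 + k)⁻¹ := by
    intro k
    have hx : ∀ j ∈ Finset.range n, (1 + (k : ℝ)) ≠ v j := by
      intro j _
      simp only [hv]
      intro h
      have h1 : (0:ℝ) < 1 + (k:ℝ) := by positivity
      have h2 : -((a j : ℝ)) ≤ 0 := by simp [Nat.cast_nonneg]
      linarith
    have := partial_frac10 hvs (Finset.nonempty_range_iff.mpr (by omega)) hx
    have hL : ∏ j ∈ Finset.range n, (1 + (k:ℝ) - v j)⁻¹ = f k := by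
      refine prod_congr rfl fun j _ => ?_
      simp only [hv, one_div]
      ring_nf
    have hR : ∀ i ∈ Finset.range n,
        (∏ j ∈ (Finset.range n).erase i, (v i - v j)⁻¹) * (1 + (k:ℝ) - v i)⁻¹ =
          lam i * ((a i : ℝ) + 1 + k)⁻¹ := by
      intro i _
      rw [← hlamv i]
      congr 1
      simp only [hv]
      ring_nf
    rw [hL, Finset.sum_congr rfl hR] at this
    exact this
  -- partial sums
  have hS : ∀ K : ℕ, ∑ k ∈ Finset.range K, f k =
      (∑ i ∈ Finset.range n, lam i * (H10 (a i + K) - H10 K))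
        - ∑ i ∈ Finset.range n, lam i * H10 (a i) := by
    intro K
    rw [Finset.sum_congr rfl fun k _ => hstep1 k, Finset.sum_comm]
    have hstep : ∀ i ∈ Finset.range n,
        ∑ k ∈ Finset.range K, lam i * ((a i : ℝ) + 1 + k)⁻¹ =
          lam i * (H10 (a i + K) - H10 (a i)) := by
      intro i _
      rw [← Finset.mul_sum, C110]
    rw [Finset.sum_congr rfl hstep]
    have expand : ∀ i, lam i * (H10 (a i + K) - H10 (a i)) =
        lam i * (H10 (a i + K) - H10 K) + lam i * H10 K - lam i * H10 (a i) := by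
      intro i; ring
    rw [Finset.sum_congr rfl fun i _ => expand i, Finset.sum_sub_distrib,
      Finset.sum_add_distrib, ← Finset.sum_mul, hlam0, zero_mul, add_zero]
  set T : ℝ := ∑ i ∈ Finset.range n, lam i * H10 (a i) with hT
  -- limit of partial sums
  have hTend : Tendsto (fun K => ∑ k ∈ Finset.range K, f k) atTop (nhds (-T)) := by
    have h1 : Tendsto (fun K => ∑ i ∈ Finset.range n, lam i * (H10 (a i + K) - H10 K))
        atTop (nhds 0) := by
      have := tendsto_finset_sum (Finset.range n)
        (fun i _ => ((D10 (a i)).const_mul (lam i)))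
      simpa using this
    have h2 := h1.sub (tendsto_const_nhds (x := T))
    rw [zero_sub] at h2
    refine h2.congr fun K => (hS K).symm
  -- identify -T with the RHS
  have hRHS : ∑ i ∈ Finset.range (n - 1),
      (∏ j ∈ (Finset.range n).erase i, (1 : ℝ) / ((a j : ℝ) - a i)) *
        ∑ k ∈ Finset.Icc (a i + 1) (a (n - 1)), (1 : ℝ) / k = -T := by
    have hterm : ∀ i ∈ Finset.range (n - 1),
        (∏ j ∈ (Finset.range n).erase i, (1 : ℝ) / ((a j : ℝ) - a i)) *
          ∑ k ∈ Finset.Icc (a i + 1) (a (n - 1)), (1 : ℝ) / k =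
          lam i * (H10 (a (n - 1)) - H10 (a i)) := by
      intro i hi
      have hi' : i < n - 1 := Finset.mem_range.mp hi
      have hle : a i ≤ a (n - 1) := le_of_lt (ha i (n - 1) hi' (by omega))
      congr 1
      · simp only [hlam, one_div]
      · rw [← C210 _ _ hle]
        exact Finset.sum_congr rfl fun k _ => (one_div _)
    rw [Finset.sum_congr rfl hterm]
    have hfull : ∑ i ∈ Finset.range n, lam i * (H10 (a (n - 1)) - H10 (a i)) =
        ∑ i ∈ Finset.range (n - 1), lam i * (H10 (a (n - 1)) - H10 (a i)) := by
      have hn1 : n = (n - 1) + 1 := by omega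
      rw [hn1, Finset.sum_range_succ]
      simp
    rw [← hfull]
    have expand : ∀ i, lam i * (H10 (a (n - 1)) - H10 (a i)) =
        lam i * H10 (a (n - 1)) - lam i * H10 (a i) := fun i => by ring
    rw [Finset.sum_congr rfl fun i _ => expand i, Finset.sum_sub_distrib, ← Finset.sum_mul,
      hlam0, zero_mul, zero_sub, hT]
  rw [hRHS]
  -- conclude via HasSum
  have hnonneg : ∀ k, 0 ≤ f k := by
    intro k
    refine Finset.prod_nonneg fun i _ => ?_
    positivity
  have : HasSum f (-T) := (hasSum_iff_tendsto_nat_of_nonneg hnonneg _).mpr hTend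
  exact this.tsum_eq
end

section
/- Let a_1 < a_2 < ... < a_n be nonnegative integers with n ≥ 2, m ≥ 1 an integer, and λ_i = ∏_{j≠i} 1/(a_j - a_i). Then Σ_{k=0}^∞ Σ_{i=1}^n λ_i/(1 + a_i + k)^{m+1} = Σ_{i=1}^{n-1} λ_i (H_{m+1}(a_n) - H_{m+1}(a_i)), where H_s(N) = Σ_{k=1}^N 1/k^s. -/
open Finset Polynomial

lemma prod_neg' {s : Finset ℕ} (f : ℕ → ℝ) :
    ∏ j ∈ s, (-(f j)) = (-1 : ℝ) ^ s.card * ∏ j ∈ s, f j := by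
  classical
  induction s using Finset.induction_on with
  | empty => simp
  | insert _ _ h ih => rw [Finset.prod_insert h, Finset.prod_insert h, ih,
      Finset.card_insert_of_notMem h]; ring

lemma coeff_lagrange_basis {s : Finset ℕ} {v : ℕ → ℝ} {i : ℕ}
    (hi : i ∈ s) :
    (Lagrange.basis s v i).coeff (s.card - 1) = ∏ j ∈ s.erase i, (v i - v j)⁻¹ := by
  have hprod : Lagrange.basis s v i
      = C (∏ j ∈ s.erase i, (v i - v j)⁻¹) * ∏ j ∈ s.erase i, (X - C (v j)) := by
    rw [Lagrange.basis]
    simp only [Lagrange.basisDivisor]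
    rw [Finset.prod_mul_distrib, map_prod]
  have hmonic : (∏ j ∈ s.erase i, (X - C (v j))).Monic :=
    monic_prod_of_monic _ _ fun j _ => monic_X_sub_C _
  have hdeg : (∏ j ∈ s.erase i, (X - C (v j))).natDegree = s.card - 1 := by
    rw [natDegree_prod _ _ fun j _ => X_sub_C_ne_zero _]
    simp [Finset.card_erase_of_mem hi]
  rw [hprod, coeff_C_mul, ← hdeg, hmonic.coeff_natDegree, mul_one]

lemma sum_lambda_zero (n : ℕ) (hn : 2 ≤ n) (a : ℕ → ℕ)
    (ha : ∀ i j, i < j → j < n → a i < a j) :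
    ∑ i ∈ Finset.range n, ∏ j ∈ (Finset.range n).erase i, (1 : ℝ) / ((a j : ℝ) - a i) = 0 := by
  set v : ℕ → ℝ := fun i => (a i : ℝ) with hv
  have hinj : Set.InjOn v (Finset.range n) := by
    intro i hi j hj hij
    simp only [Finset.coe_range, Set.mem_Iio] at hi hj
    by_contra h
    rcases lt_or_gt_of_ne h with h' | h'
    · exact absurd hij (ne_of_lt (by simp only [hv]; exact_mod_cast ha i j h' hj))
    · exact absurd hij.symm (ne_of_lt (by simp only [hv]; exact_mod_cast ha j i h' hi))
  have hsum := Lagrange.sum_basis hinj ⟨0, Finset.mem_range.2 (by omega)⟩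
  have hco := congrArg (fun p => Polynomial.coeff p ((Finset.range n).card - 1)) hsum
  simp only [Polynomial.finset_sum_coeff] at hco
  rw [Polynomial.coeff_one] at hco
  have hne : (Finset.range n).card - 1 ≠ 0 := by simp; omega
  rw [if_neg hne] at hco
  have hco' : ∑ i ∈ Finset.range n, ∏ j ∈ (Finset.range n).erase i, (v i - v j)⁻¹ = 0 := by
    rw [← hco]
    exact Finset.sum_congr rfl fun i hi => (coeff_lagrange_basis hi).symm
  have key : ∀ i ∈ Finset.range n,
      ∏ j ∈ (Finset.range n).erase i, (1 : ℝ) / ((a j : ℝ) - a i)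
        = (-1 : ℝ) ^ (n - 1) * ∏ j ∈ (Finset.range n).erase i, (v i - v j)⁻¹ := by
    intro i hi
    have : ∀ j, (1 : ℝ) / ((a j : ℝ) - a i) = -((v i - v j)⁻¹) := by
      intro j
      rw [one_div, ← inv_neg, neg_sub]
    simp_rw [this]
    rw [prod_neg', Finset.card_erase_of_mem hi, Finset.card_range]
  rw [Finset.sum_congr rfl key, ← Finset.mul_sum, hco', mul_zero]

theorem test : True := trivial

theorem stmt_11 (n : ℕ) (hn : 2 ≤ n) (m : ℕ) (hm : 1 ≤ m) (a : ℕ → ℕ)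
    (ha : ∀ i j, i < j → j < n → a i < a j) :
    ∑' k : ℕ, ∑ i ∈ Finset.range n,
        (∏ j ∈ (Finset.range n).erase i, (1 : ℝ) / ((a j : ℝ) - a i)) /
          (1 + a i + k : ℝ) ^ (m + 1) =
      ∑ i ∈ Finset.range (n - 1),
        (∏ j ∈ (Finset.range n).erase i, (1 : ℝ) / ((a j : ℝ) - a i)) *
          ((∑ k ∈ Finset.Icc 1 (a (n - 1)), 1 / (k : ℝ) ^ (m + 1)) -
            ∑ k ∈ Finset.Icc 1 (a i), 1 / (k : ℝ) ^ (m + 1)) := by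
  obtain ⟨n', rfl⟩ : ∃ n', n = n' + 1 := ⟨n - 1, by omega⟩
  simp only [Nat.add_sub_cancel]
  set L : ℕ → ℝ := fun i => ∏ j ∈ (Finset.range (n' + 1)).erase i, (1 : ℝ) / ((a j : ℝ) - a i)
    with hLdef
  set f : ℕ → ℝ := fun t => 1 / (t : ℝ) ^ (m + 1) with hfdef
  have hf : Summable f := by
    rw [hfdef]
    exact Real.summable_one_div_nat_pow.mpr (by omega)
  set g : ℕ → ℕ → ℝ := fun b k => f (k + (b + 1)) with hgdef
  have hg : ∀ b, Summable (g b) := fun b => (summable_nat_add_iff (b + 1)).2 hf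
  set S : ℕ → ℝ := fun N => ∑ k ∈ Finset.Icc 1 N, 1 / (k : ℝ) ^ (m + 1) with hSdef
  have hS : ∀ N : ℕ, ∑ t ∈ Finset.range (N + 1), f t = S N := by
    intro N
    have hins : Finset.range (N + 1) = insert 0 (Finset.Icc 1 N) := by
      ext x; simp; omega
    rw [hins, Finset.sum_insert (by simp)]
    have : f 0 = 0 := by simp [hfdef]
    rw [this, zero_add]
  have htg : ∀ b, ∑' k, g b k = (∑' t, f t) - S b := by
    intro b
    have := Summable.sum_add_tsum_nat_add (f := f) (b + 1) hf
    rw [hS b] at this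
    linarith
  have hgval : ∀ b k : ℕ, g b k = 1 / (1 + (b : ℝ) + k) ^ (m + 1) := by
    intro b k
    have : ((k + (b + 1) : ℕ) : ℝ) = 1 + (b : ℝ) + k := by push_cast; ring
    simp only [hgdef, hfdef, this]
  have hL0 : ∑ i ∈ Finset.range (n' + 1), L i = 0 :=
    sum_lambda_zero (n' + 1) hn a ha
  have hpt : ∀ k : ℕ, ∑ i ∈ Finset.range (n' + 1), L i / (1 + (a i : ℝ) + k) ^ (m + 1)
      = ∑ i ∈ Finset.range n', L i * (g (a i) k - g (a n') k) := by
    intro k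
    have h1 : ∀ i, L i / (1 + (a i : ℝ) + k) ^ (m + 1) = L i * g (a i) k := by
      intro i; rw [hgval, div_eq_mul_one_div]
    simp_rw [h1, mul_sub, Finset.sum_sub_distrib, ← Finset.sum_mul]
    rw [Finset.sum_range_succ (fun i => L i * g (a i) k)]
    rw [Finset.sum_range_succ L] at hL0
    have : L n' = -∑ i ∈ Finset.range n', L i := by linarith
    rw [this]; ring
  rw [tsum_congr hpt]
  rw [Summable.tsum_finsetSum (fun i _ => (((hg (a i)).sub (hg (a n'))).mul_left (L i)))]
  refine Finset.sum_congr rfl fun i _ => ?_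
  rw [tsum_mul_left, Summable.tsum_sub (hg (a i)) (hg (a n')), htg, htg]
  rw [hSdef]
  ring
end

section
/- Let c_1,...,c_r be distinct integers and b_1,...,b_r positive integers, with μ_{ij} = ((-1)^{j-1}/(b_i-j)!) · d^{b_i-j}/dz^{b_i-j}|_{z=c_i} ∏_{ℓ≠i} 1/(c_ℓ - z)^{b_ℓ}. Then the reduced denominator of the rational number μ_{ij} divides (b_i - j)! · ∏_{ℓ≠i} (c_ℓ - c_i)^{b_ℓ + b_i - j}. -/
lemma factor_deriv (x z : ℝ) (hx : x ≠ z) (e : ℕ) :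
    HasDerivAt (fun z : ℝ => ((x - z) ^ e)⁻¹) ((e : ℝ) * ((x - z) ^ (e + 1))⁻¹) z := by
  have h1 : HasDerivAt (fun z : ℝ => x - z) (-1) z := by
    simpa using (hasDerivAt_id z).const_sub x
  have h3 := (h1.pow e).inv (pow_ne_zero e (sub_ne_zero.mpr hx))
  have h3' : HasDerivAt (fun z : ℝ => ((x - z) ^ e)⁻¹)
      (-((e : ℝ) * (x - z) ^ (e - 1) * -1) / ((x - z) ^ e) ^ 2) z := h3
  convert h3' using 1
  have hxz : x - z ≠ 0 := sub_ne_zero.mpr hx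
  cases e with
  | zero => simp
  | succ k => rw [Nat.add_sub_cancel]; field_simp; ring

lemma prod_deriv {r : ℕ} (c : Fin r → ℤ) (s : Finset (Fin r)) (e : Fin r → ℕ) (z : ℝ)
    (hz : ∀ ℓ ∈ s, (c ℓ : ℝ) ≠ z) :
    HasDerivAt (fun z : ℝ => ∏ ℓ ∈ s, (((c ℓ : ℝ) - z) ^ e ℓ)⁻¹)
      (∑ ℓ' ∈ s, (e ℓ' : ℝ) *
        ∏ ℓ ∈ s, (((c ℓ : ℝ) - z) ^ (e ℓ + if ℓ = ℓ' then 1 else 0))⁻¹) z := by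
  have h := HasDerivAt.fun_finsetProd (u := s)
    (f := fun ℓ (z : ℝ) => (((c ℓ : ℝ) - z) ^ e ℓ)⁻¹)
    (f' := fun ℓ => (e ℓ : ℝ) * (((c ℓ : ℝ) - z) ^ (e ℓ + 1))⁻¹)
    (fun ℓ hℓ => factor_deriv _ z (hz ℓ hℓ) (e ℓ))
  refine h.congr_deriv (Eq.symm ?_)
  refine Finset.sum_congr rfl fun ℓ' hℓ' => ?_
  rw [smul_eq_mul]
  rw [← Finset.mul_prod_erase s _ hℓ']
  have : ∀ ℓ ∈ s.erase ℓ', (((c ℓ : ℝ) - z) ^ (e ℓ + if ℓ = ℓ' then 1 else 0))⁻¹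
      = (((c ℓ : ℝ) - z) ^ e ℓ)⁻¹ := by
    intro ℓ hℓ
    rw [if_neg (Finset.ne_of_mem_erase hℓ)]
    simp
  rw [Finset.prod_congr rfl this, if_pos rfl]
  ring

lemma rep {r : ℕ} (c : Fin r → ℤ) (b : Fin r → ℕ) (s : Finset (Fin r)) (n : ℕ) :
    ∃ (m : ℕ) (a : Fin m → ℤ) (k : Fin m → Fin r → ℕ),
      (∀ t ℓ, k t ℓ ≤ n) ∧ ∀ z : ℝ, (∀ ℓ ∈ s, (c ℓ : ℝ) ≠ z) →
        iteratedDeriv n (fun z : ℝ => ∏ ℓ ∈ s, (((c ℓ : ℝ) - z) ^ b ℓ)⁻¹) z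
          = ∑ t, (a t : ℝ) * ∏ ℓ ∈ s, (((c ℓ : ℝ) - z) ^ (b ℓ + k t ℓ))⁻¹ := by
  induction n with
  | zero =>
    exact ⟨1, 1, 0, fun t ℓ => le_refl 0, fun z _ => by simp [iteratedDeriv_zero]⟩
  | succ n ih =>
    obtain ⟨m, a, k, hk, hEq⟩ := ih
    have hU : IsOpen {z : ℝ | ∀ ℓ ∈ s, (c ℓ : ℝ) ≠ z} := by
      have : {z : ℝ | ∀ ℓ ∈ s, (c ℓ : ℝ) ≠ z} = ⋂ ℓ ∈ s, {((c ℓ : ℝ))}ᶜ := by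
        ext z; simp [ne_comm, eq_comm]
      rw [this]
      exact isOpen_biInter_finset fun ℓ _ => isOpen_compl_singleton
    refine ⟨m * r,
      fun t => (fun p : Fin m × Fin r =>
        if p.2 ∈ s then a p.1 * (b p.2 + k p.1 p.2) else 0) (finProdFinEquiv.symm t),
      fun t => (fun p : Fin m × Fin r =>
        fun ℓ => k p.1 ℓ + if ℓ = p.2 then 1 else 0) (finProdFinEquiv.symm t),
      fun t ℓ => by
        simp only []
        have := hk (finProdFinEquiv.symm t).1 ℓ
        split <;> omega,
      fun z hz => ?_⟩
    rw [iteratedDeriv_succ]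
    set g : ℝ → ℝ := fun z => ∑ t, (a t : ℝ) * ∏ ℓ ∈ s, (((c ℓ : ℝ) - z) ^ (b ℓ + k t ℓ))⁻¹
      with hg_def
    have hev : iteratedDeriv n (fun z : ℝ => ∏ ℓ ∈ s, (((c ℓ : ℝ) - z) ^ b ℓ)⁻¹) =ᶠ[nhds z] g := by
      filter_upwards [hU.mem_nhds hz] with w hw using hEq w hw
    rw [hev.deriv_eq]
    have hg : HasDerivAt g (∑ t, (a t : ℝ) * ∑ ℓ' ∈ s, ((b ℓ' + k t ℓ' : ℕ) : ℝ) *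
        ∏ ℓ ∈ s, (((c ℓ : ℝ) - z) ^ (b ℓ + k t ℓ + if ℓ = ℓ' then 1 else 0))⁻¹) z :=
      HasDerivAt.fun_sum fun t _ =>
        (prod_deriv c s (fun ℓ => b ℓ + k t ℓ) z hz).const_mul _
    rw [hg.deriv]
    rw [← Equiv.sum_comp finProdFinEquiv
      (fun t : Fin (m * r) => ((((fun p : Fin m × Fin r =>
        if p.2 ∈ s then a p.1 * (b p.2 + k p.1 p.2) else 0) (finProdFinEquiv.symm t)) : ℤ) : ℝ) *
        ∏ ℓ ∈ s, (((c ℓ : ℝ) - z) ^ (b ℓ + ((fun p : Fin m × Fin r =>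
          fun ℓ => k p.1 ℓ + if ℓ = p.2 then 1 else 0) (finProdFinEquiv.symm t)) ℓ))⁻¹)]
    simp only [Equiv.symm_apply_apply]
    rw [Fintype.sum_prod_type]
    refine Finset.sum_congr rfl fun t _ => ?_
    rw [Finset.mul_sum]
    symm
    simp only [apply_ite (fun x : ℤ => (x : ℝ)), Int.cast_zero, ite_mul, zero_mul]
    rw [Finset.sum_ite_mem, Finset.univ_inter]
    refine Finset.sum_congr rfl fun y hy => ?_
    have hprod : (∏ ℓ ∈ s, (((c ℓ : ℝ) - z) ^ (b ℓ + (k t ℓ + if ℓ = y then 1 else 0)))⁻¹)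
        = ∏ ℓ ∈ s, (((c ℓ : ℝ) - z) ^ (b ℓ + k t ℓ + if ℓ = y then 1 else 0))⁻¹ :=
      Finset.prod_congr rfl fun ℓ _ => by rw [add_assoc]
    rw [hprod]
    push_cast
    ring

theorem stmt_13 (r : ℕ) (c : Fin r → ℤ) (hc : Function.Injective c)
    (b : Fin r → ℕ) (hb : ∀ i, 0 < b i) (i : Fin r) (j : ℕ)
    (hj1 : 1 ≤ j) (hj2 : j ≤ b i) (q : ℚ)
    (hq : (q : ℝ) = ((-1 : ℝ) ^ (j - 1) / ((b i - j).factorial : ℝ)) *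
        iteratedDeriv (b i - j)
          (fun z : ℝ => ∏ ℓ ∈ Finset.univ.erase i, (((c ℓ : ℝ) - z) ^ (b ℓ))⁻¹)
          ((c i : ℝ))) :
    (q.den : ℤ) ∣ ((b i - j).factorial : ℤ) *
        ∏ ℓ ∈ Finset.univ.erase i, (c ℓ - c i) ^ (b ℓ + b i - j) := by
  set n := b i - j with hn
  set s := Finset.univ.erase i with hs
  have hcne : ∀ ℓ ∈ s, c ℓ ≠ c i := fun ℓ hℓ h => Finset.ne_of_mem_erase hℓ (hc h)
  have hzi : ∀ ℓ ∈ s, (c ℓ : ℝ) ≠ (c i : ℝ) := fun ℓ hℓ h => hcne ℓ hℓ (by exact_mod_cast h)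
  have hDne : ∀ ℓ ∈ s, ((c ℓ : ℝ) - (c i : ℝ)) ≠ 0 := fun ℓ hℓ => sub_ne_zero.mpr (hzi ℓ hℓ)
  obtain ⟨m, a, k, hk, hEq⟩ := rep c b s n
  rw [hEq _ hzi] at hq
  set D : ℤ := ∏ ℓ ∈ s, (c ℓ - c i) ^ (b ℓ + n) with hD
  set N : ℤ := (-1) ^ (j - 1) * ∑ t, a t * ∏ ℓ ∈ s, (c ℓ - c i) ^ (n - k t ℓ) with hN
  set M : ℤ := (n.factorial : ℤ) * D with hM
  have hfac : ((n.factorial : ℝ)) ≠ 0 := Nat.cast_ne_zero.mpr n.factorial_ne_zero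
  have hMne : M ≠ 0 := by
    apply mul_ne_zero
    · exact_mod_cast n.factorial_ne_zero
    · rw [hD]
      apply Finset.prod_ne_zero_iff.mpr
      intro ℓ hℓ
      exact pow_ne_zero _ (sub_ne_zero.mpr (hcne ℓ hℓ))
  have hSP : (∑ t, (a t : ℝ) * ∏ ℓ ∈ s, (((c ℓ : ℝ) - (c i : ℝ)) ^ (b ℓ + k t ℓ))⁻¹) *
      (∏ ℓ ∈ s, ((c ℓ : ℝ) - (c i : ℝ)) ^ (b ℓ + n)) =
      ∑ t, (a t : ℝ) * ∏ ℓ ∈ s, ((c ℓ : ℝ) - (c i : ℝ)) ^ (n - k t ℓ) := by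
    rw [Finset.sum_mul]
    refine Finset.sum_congr rfl fun t _ => ?_
    rw [mul_assoc, ← Finset.prod_mul_distrib]
    congr 1
    refine Finset.prod_congr rfl fun ℓ hℓ => ?_
    have hsplit : ((c ℓ : ℝ) - (c i : ℝ)) ^ (b ℓ + n) =
        ((c ℓ : ℝ) - (c i : ℝ)) ^ (b ℓ + k t ℓ) * ((c ℓ : ℝ) - (c i : ℝ)) ^ (n - k t ℓ) := by
      rw [← pow_add]; congr 1; have := hk t ℓ; omega
    rw [hsplit, inv_mul_cancel_left₀ (pow_ne_zero _ (hDne ℓ hℓ))]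
  have key : (q : ℝ) * (M : ℝ) = (N : ℝ) := by
    rw [hq, hM, hN, hD]
    push_cast
    rw [show ((-1 : ℝ)) ^ (j - 1) / (n.factorial : ℝ) *
        (∑ t, (a t : ℝ) * ∏ ℓ ∈ s, (((c ℓ : ℝ) - (c i : ℝ)) ^ (b ℓ + k t ℓ))⁻¹) *
        ((n.factorial : ℝ) * ∏ ℓ ∈ s, ((c ℓ : ℝ) - (c i : ℝ)) ^ (b ℓ + n)) =
        ((-1 : ℝ)) ^ (j - 1) *
        ((∑ t, (a t : ℝ) * ∏ ℓ ∈ s, (((c ℓ : ℝ) - (c i : ℝ)) ^ (b ℓ + k t ℓ))⁻¹) *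
        (∏ ℓ ∈ s, ((c ℓ : ℝ) - (c i : ℝ)) ^ (b ℓ + n))) from by field_simp]
    rw [hSP]
  have keyQ : q * (M : ℚ) = (N : ℚ) := by
    have : ((q * (M : ℚ) : ℚ) : ℝ) = (((N : ℚ) : ℚ) : ℝ) := by push_cast; exact_mod_cast key
    exact_mod_cast this
  have hqNM : q = (N : ℚ) / (M : ℚ) := by
    rw [eq_div_iff (by exact_mod_cast hMne)]
    exact keyQ
  have hdvd : (q.den : ℤ) ∣ M := by
    rw [hqNM, show ((N : ℚ) / (M : ℚ)) = Rat.divInt N M from (Rat.divInt_eq_div N M).symm]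
    exact Rat.den_dvd N M
  have hDeq : ((n.factorial : ℤ)) * D = ((n.factorial : ℤ)) *
      ∏ ℓ ∈ s, (c ℓ - c i) ^ (b ℓ + b i - j) := by
    congr 1
    refine Finset.prod_congr rfl fun ℓ _ => ?_
    congr 1
    omega
  rw [← hDeq]
  exact hdvd
end

section
/- Let f ∈ (0,1), and a, b, n real with the integrals convergent. Then ∫_0^1 s^a (1-s)^b / (1 - f s)^{n+1} ds = (1-f)^{b-n} ∫_0^1 r^b (1-r)^a / (1 - f r)^{a+b+1-n} dr. -/
open Real MeasureTheory Set intervalIntegral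

lemma aux_rpow_exp (y p : ℝ) (hy : 0 < y) : y ^ p = Real.exp (p * Real.log y) := by
  rw [Real.rpow_def_of_pos hy, mul_comm]

lemma aux_alg (f a b n x : ℝ) (hf0 : 0 < f) (hf1 : f < 1) (hx0 : 0 < x) (hx1 : x < 1) :
    (f - 1) / (1 - f * x) ^ 2 *
      (((1 - x) / (1 - f * x)) ^ a * (1 - (1 - x) / (1 - f * x)) ^ b /
        (1 - f * ((1 - x) / (1 - f * x))) ^ (n + 1)) =
    -((1 - f) ^ (b - n) * (x ^ b * (1 - x) ^ a / (1 - f * x) ^ (a + b + 1 - n))) := by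
  have hD : 0 < 1 - f * x := by nlinarith
  have h1x : 0 < 1 - x := by linarith
  have h1f : 0 < 1 - f := by linarith
  have e1 : 1 - (1 - x) / (1 - f * x) = x * (1 - f) / (1 - f * x) := by
    rw [eq_div_iff hD.ne', sub_mul, div_mul_cancel₀ _ hD.ne']; ring
  have e2 : 1 - f * ((1 - x) / (1 - f * x)) = (1 - f) / (1 - f * x) := by
    field_simp; ring
  rw [e1, e2]
  have hsq : (1 - f * x) ^ 2 = Real.exp (2 * Real.log (1 - f * x)) := by
    rw [← Real.rpow_natCast (1 - f * x) 2, Real.rpow_def_of_pos hD]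
    norm_num [mul_comm]
  rw [hsq,
    aux_rpow_exp _ a (by positivity), aux_rpow_exp _ b (by positivity),
    aux_rpow_exp _ (n + 1) (by positivity), aux_rpow_exp _ (b - n) h1f,
    aux_rpow_exp x b hx0, aux_rpow_exp (1 - x) a h1x,
    aux_rpow_exp _ (a + b + 1 - n) hD,
    Real.log_div (by positivity) hD.ne', Real.log_div (by positivity) hD.ne',
    Real.log_div (by positivity) hD.ne', Real.log_mul hx0.ne' h1f.ne',
    show f - 1 = -Real.exp (Real.log (1 - f)) by rw [Real.exp_log h1f]; ring]
  rw [neg_div, neg_mul, neg_inj]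
  simp only [div_eq_mul_inv, ← Real.exp_neg, ← Real.exp_add]
  congr 1
  ring

theorem stmt_15 (f a b n : ℝ) (hf : f ∈ Set.Ioo (0 : ℝ) 1)
    (h1 : IntervalIntegrable
      (fun s : ℝ => s ^ a * (1 - s) ^ b / (1 - f * s) ^ (n + 1)) MeasureTheory.volume 0 1)
    (h2 : IntervalIntegrable
      (fun r : ℝ => r ^ b * (1 - r) ^ a / (1 - f * r) ^ (a + b + 1 - n)) MeasureTheory.volume 0 1) :
    ∫ s in (0 : ℝ)..1, s ^ a * (1 - s) ^ b / (1 - f * s) ^ (n + 1) =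
      (1 - f) ^ (b - n) *
        ∫ r in (0 : ℝ)..1, r ^ b * (1 - r) ^ a / (1 - f * r) ^ (a + b + 1 - n) := by
  obtain ⟨hf0, hf1⟩ := hf
  have h1f : 0 < 1 - f := by linarith
  have hD : ∀ x : ℝ, x ≤ 1 → 0 < 1 - f * x := by intro x hx; nlinarith
  set g : ℝ → ℝ := fun s => s ^ a * (1 - s) ^ b / (1 - f * s) ^ (n + 1) with hgdef
  set g2 : ℝ → ℝ := fun r => r ^ b * (1 - r) ^ a / (1 - f * r) ^ (a + b + 1 - n) with hg2def
  set φ : ℝ → ℝ := fun x => (1 - x) / (1 - f * x) with hφdef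
  set φ' : ℝ → ℝ := fun x => (f - 1) / (1 - f * x) ^ 2 with hφ'def
  have huIcc : Set.uIcc (1 : ℝ) 0 = Set.Icc 0 1 := by
    rw [Set.uIcc_of_ge (by norm_num)]
  have hmin : min (1 : ℝ) 0 = 0 := by norm_num
  have hmax : max (1 : ℝ) 0 = 1 := by norm_num
  -- φ maps Icc 0 1 to Icc 0 1, Ioo to Ioo
  have hmapsIcc : ∀ x ∈ Set.Icc (0:ℝ) 1, φ x ∈ Set.Icc (0:ℝ) 1 := by
    intro x hx
    have hDx := hD x hx.2
    constructor
    · apply div_nonneg (by linarith [hx.2]) hDx.le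
    · rw [div_le_one hDx]
      nlinarith [hx.1]
  have hmapsIoo : ∀ x ∈ Set.Ioo (0:ℝ) 1, φ x ∈ Set.Ioo (0:ℝ) 1 := by
    intro x hx
    have hDx := hD x hx.2.le
    constructor
    · apply div_pos (by linarith [hx.2]) hDx
    · rw [div_lt_one hDx]
      nlinarith [hx.1]
  -- continuity of φ
  have hφcont : ContinuousOn φ (Set.uIcc (1:ℝ) 0) := by
    rw [huIcc]
    apply ContinuousOn.div
    · exact (continuous_const.sub continuous_id).continuousOn
    · exact (continuous_const.sub (continuous_const.mul continuous_id)).continuousOn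
    · exact fun x hx => (hD x hx.2).ne'
  -- derivative
  have hderiv : ∀ x ∈ Set.Ioo (min (1:ℝ) 0) (max (1:ℝ) 0),
      HasDerivWithinAt φ (φ' x) (Set.Ioi x) x := by
    rw [hmin, hmax]
    intro x hx
    have hDx := hD x hx.2.le
    have hu : HasDerivAt (fun y : ℝ => 1 - y) (-1) x := by
      simpa using (hasDerivAt_id x).const_sub 1
    have hv : HasDerivAt (fun y : ℝ => 1 - f * y) (-f) x := by
      simpa using ((hasDerivAt_id x).const_mul f).const_sub 1
    have h := hu.div hv hDx.ne'
    have heq : (-1 * (1 - f * x) - (1 - x) * (-f)) / (1 - f * x) ^ 2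
        = (f - 1) / (1 - f * x) ^ 2 := by ring
    rw [heq] at h
    exact h.hasDerivWithinAt
  -- continuity of g on Ioo
  have hgcont : ContinuousOn g (Set.Ioo (0:ℝ) 1) := by
    intro s hs
    have h3 : 0 < 1 - f * s := hD s hs.2.le
    apply ContinuousAt.continuousWithinAt
    apply ContinuousAt.div
    · exact (continuousAt_id.rpow_const (Or.inl hs.1.ne')).mul
        ((continuousAt_const.sub continuousAt_id).rpow_const
          (Or.inl (sub_ne_zero.mpr (by simpa using hs.2.ne'))))
    · exact (continuousAt_const.sub (continuousAt_const.mul continuousAt_id)).rpow_const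
        (Or.inl (by simpa using h3.ne'))
    · exact (Real.rpow_pos_of_pos h3 _).ne'
  have hg1Icc : IntegrableOn g (Set.Icc (0:ℝ) 1) := by
    rw [← intervalIntegrable_iff_integrableOn_Icc_of_le zero_le_one]
    exact h1
  have hg2Icc : IntegrableOn g2 (Set.Icc (0:ℝ) 1) := by
    rw [← intervalIntegrable_iff_integrableOn_Icc_of_le zero_le_one]
    exact h2
  -- key pointwise identity
  have key : ∀ x ∈ Set.Ioo (0:ℝ) 1,
      φ' x • (g ∘ φ) x = -((1 - f) ^ (b - n) * g2 x) := by
    intro x hx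
    have := aux_alg f a b n x hf0 hf1 hx.1 hx.2
    simpa [hφdef, hφ'def, hgdef, hg2def, Function.comp, smul_eq_mul] using this
  have hne : ∀ c : ℝ, ∀ᵐ x : ℝ ∂(MeasureTheory.volume : Measure ℝ), x ≠ c := by
    intro c
    rw [MeasureTheory.ae_iff]
    simp only [ne_eq, not_not, Set.setOf_eq_eq_singleton]
    exact measure_singleton c
  -- integrability of substituted integrand
  have hsubint : IntegrableOn (fun x => φ' x • (g ∘ φ) x) (Set.uIcc (1:ℝ) 0) := by
    rw [huIcc]
    have hbase : IntegrableOn (fun x => -((1 - f) ^ (b - n) * g2 x)) (Set.Icc (0:ℝ) 1) :=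
      (hg2Icc.const_mul _).neg
    apply hbase.congr
    rw [Filter.EventuallyEq, MeasureTheory.ae_restrict_iff' measurableSet_Icc]
    filter_upwards [hne 0, hne 1] with x hx0 hx1 hx
    exact (key x ⟨lt_of_le_of_ne hx.1 (Ne.symm hx0), lt_of_le_of_ne hx.2 hx1⟩).symm
  have hsub := intervalIntegral.integral_comp_smul_deriv''' (a := (1:ℝ)) (b := 0) hφcont hderiv
      (hgcont.mono (by rw [hmin, hmax]; rintro y ⟨x, hx, rfl⟩; exact hmapsIoo x hx))
      (hg1Icc.mono_set (by rintro y ⟨x, hx, rfl⟩; exact hmapsIcc x (huIcc ▸ hx)))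
      hsubint
  have hφ1 : φ 1 = 0 := by simp [hφdef]
  have hφ0 : φ 0 = 1 := by simp [hφdef]
  rw [hφ1, hφ0] at hsub
  rw [← hsub, intervalIntegral.integral_symm]
  have hcongr : ∫ x in (0:ℝ)..1, φ' x • (g ∘ φ) x
      = ∫ x in (0:ℝ)..1, -((1 - f) ^ (b - n) * g2 x) := by
    apply intervalIntegral.integral_congr_ae
    filter_upwards [hne 1] with x hx1 hmem
    rw [Set.uIoc_of_le zero_le_one] at hmem
    exact key x ⟨hmem.1, lt_of_le_of_ne hmem.2 hx1⟩
  rw [hcongr, intervalIntegral.integral_neg, neg_neg, intervalIntegral.integral_const_mul]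
end
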